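/- Let h > 1 and v ∈ [0,1]. Then (1-v) + v/h - h^(-v) ≤ L(1,h)·log S(h), where L(1,h) = (h-1)/log h and S(h) is the Specht ratio. -/

import Mathlib

theorem stmt_9 (h v : ℝ) (hh : 1 < h) (hv0 : 0 ≤ v) (hv1 : v ≤ 1) :
    (1 - v) + v / h - h ^ (-v) ≤
      (h - 1) / Real.log h *
        Real.log (h ^ (1 / (h - 1)) /
          (Real.exp 1 * ((1 / (h - 1)) * Real.log h))) := by
  have hh0 : (0:ℝ) < h := lt_trans one_pos hh
  have ht : 0 < Real.log h := Real.log_pos hh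
  have hh1 : 0 < h - 1 := by linarith
  set t := Real.log h with htdef
  set L : ℝ := (h - 1) / t with hLdef
  have hL : 0 < L := div_pos hh1 ht
  set ℓ := Real.log L with hldef
  have hrpow : h ^ (-v) = Real.exp (-(v * t)) := by
    rw [Real.rpow_def_of_pos hh0, htdef]; ring_nf
  have hlogL : ℓ = Real.log (h - 1) - Real.log t := by
    rw [hldef, hLdef, Real.log_div (ne_of_gt hh1) (ne_of_gt ht)]
  have hRHS : (h - 1) / t *
        Real.log (h ^ (1 / (h - 1)) / (Real.exp 1 * ((1 / (h - 1)) * t)))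
      = 1 - L + L * ℓ := by
    have hd : (0:ℝ) < (1 / (h - 1)) * t := by positivity
    have h1 : Real.log (h ^ (1 / (h - 1))) = (1 / (h - 1)) * t := by
      rw [Real.log_rpow hh0]
    have h2 : Real.log (Real.exp 1 * ((1 / (h - 1)) * t))
        = 1 + (Real.log t - Real.log (h - 1)) := by
      rw [Real.log_mul (Real.exp_ne_zero 1) (ne_of_gt hd), Real.log_exp,
        one_div, Real.log_mul (by positivity) (ne_of_gt ht), Real.log_inv]
      ring
    rw [Real.log_div (by positivity) (by positivity), h1, h2, hlogL, hLdef]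
    field_simp
    ring
  rw [hRHS, hrpow]
  -- tangent line bound
  have htan : (L / h) * ((-(v * t) - (ℓ - t)) + 1) ≤ Real.exp (-(v * t)) := by
    have := Real.add_one_le_exp (-(v * t) - (ℓ - t))
    have hmul := mul_le_mul_of_nonneg_left this (le_of_lt (div_pos hL hh0))
    calc (L / h) * ((-(v * t) - (ℓ - t)) + 1)
        ≤ (L / h) * Real.exp (-(v * t) - (ℓ - t)) := hmul
      _ = Real.exp (-(v * t)) := by
          rw [Real.exp_sub, Real.exp_sub, Real.exp_log hL, htdef, Real.exp_log hh0]
          field_simp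
  -- key inequality: L ≤ 1 + L * ℓ
  have hkey : L ≤ 1 + L * ℓ := by
    have := Real.log_le_sub_one_of_pos (show (0:ℝ) < 1 / L by positivity)
    rw [Real.log_div one_ne_zero (ne_of_gt hL), Real.log_one, ← hldef] at this
    have h3 : L * (0 - ℓ) ≤ L * (1 / L - 1) := mul_le_mul_of_nonneg_left this hL.le
    have h4 : L * (1 / L) = 1 := by field_simp
    nlinarith
  have htL : L * t = h - 1 := by rw [hLdef]; field_simp
  have hvt : L * (v * t) = v * (h - 1) := by
    rw [show L * (v * t) = v * (L * t) by ring, htL]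
  have hmain : h * (1 - v) + v - L * ((-(v * t) - (ℓ - t)) + 1)
      ≤ h * (1 - L + L * ℓ) := by
    nlinarith [hvt, htL, mul_pos hL ht,
      mul_nonneg (mul_pos hL ht).le (by nlinarith : (0:ℝ) ≤ 1 + L * ℓ - L)]
  have hout : 1 - v + v / h - L / h * ((-(v * t) - (ℓ - t)) + 1) ≤ 1 - L + L * ℓ := by
    rw [← sub_nonneg]
    have hA : 1 - L + L * ℓ - (1 - v + v / h - L / h * ((-(v * t) - (ℓ - t)) + 1))
        = (h * (1 - L + L * ℓ) - (h * (1 - v) + v - L * ((-(v * t) - (ℓ - t)) + 1))) / h := by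
      field_simp
    rw [hA]
    exact div_nonneg (by linarith) hh0.le
  linarith [htan]
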